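/- Let p be an odd prime, n ≥ 1 an integer, and q = p^n. Then PSL(2, 𝔽_q) contains a subgroup which is a semidirect product U ⋊ ℤ/((q-1)/2) with faithful action, where U is the additive group of the field 𝔽_q (an elementary abelian p-group of rank n): there exist an injective group homomorphism φ from ℤ/((q-1)/2) into the automorphism group of the additive group of 𝔽_q, and an injective group homomorphism from the semidirect product U ⋊_φ (ℤ/((q-1)/2)) into PSL(2, 𝔽_q). -/

import Mathlib

open Matrix

/-- The projective special linear group `PSL(n, F)`: the quotient of `SL(n, F)` by its center. -/
abbrev PSL (n : ℕ) (F : Type) [Field F] :=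
  Matrix.SpecialLinearGroup (Fin n) F ⧸ Subgroup.center (Matrix.SpecialLinearGroup (Fin n) F)

namespace MetacyclicAux

variable (F : Type) [Field F]

/-- Upper unitriangular matrices as a hom from the additive group of `F`. -/
def unip : Multiplicative F →* Matrix.SpecialLinearGroup (Fin 2) F where
  toFun x := ⟨!![1, x.toAdd; 0, 1], by simp [Matrix.det_fin_two_of]⟩
  map_one' := Subtype.ext (by simp [Matrix.one_fin_two])
  map_mul' x y := Subtype.ext (by
    simp [Matrix.SpecialLinearGroup.coe_mul, Matrix.mul_fin_two, toAdd_mul, add_comm]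
    erw [Matrix.SpecialLinearGroup.coe_mul]
    simp [Matrix.SpecialLinearGroup.coe_mul, Matrix.mul_fin_two, toAdd_mul, add_comm])

/-- Diagonal matrices as a hom from the units of `F`. -/
def diag : Fˣ →* Matrix.SpecialLinearGroup (Fin 2) F where
  toFun a := ⟨!![(a : F), 0; 0, ((a⁻¹ : Fˣ) : F)], by
    simp [Matrix.det_fin_two_of, ← Units.val_mul]⟩
  map_one' := Subtype.ext (by simp [Matrix.one_fin_two])
  map_mul' a b := Subtype.ext (by
    simp [Matrix.SpecialLinearGroup.coe_mul, Matrix.mul_fin_two, mul_comm,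
      Units.val_inv_eq_inv_val, mul_inv]
    erw [Matrix.SpecialLinearGroup.coe_mul]
    simp [Matrix.SpecialLinearGroup.coe_mul, Matrix.mul_fin_two, mul_comm,
      Units.val_inv_eq_inv_val, mul_inv])

lemma unip_coe (x : Multiplicative F) :
    ((unip F x : Matrix.SpecialLinearGroup (Fin 2) F) : Matrix (Fin 2) (Fin 2) F) =
      !![1, x.toAdd; 0, 1] := rfl

lemma diag_coe (a : Fˣ) :
    ((diag F a : Matrix.SpecialLinearGroup (Fin 2) F) : Matrix (Fin 2) (Fin 2) F) =
      !![(a : F), 0; 0, ((a⁻¹ : Fˣ) : F)] := rfl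

lemma diag_conj_unip (a : Fˣ) (x : Multiplicative F) :
    diag F a * unip F x * (diag F a)⁻¹ =
      unip F (Multiplicative.ofAdd ((a : F) ^ 2 * x.toAdd)) := by
  rw [mul_inv_eq_iff_eq_mul]
  apply Subtype.ext
  have ha : (a : F) ≠ 0 := a.ne_zero
  ext i j
  fin_cases i <;> fin_cases j <;>
    simp [unip_coe, diag_coe, Matrix.SpecialLinearGroup.coe_mul, Matrix.mul_fin_two,
      Units.val_inv_eq_inv_val] <;>
    field_simp <;> ring

theorem aux (m : ℕ) (hm : m ≠ 0) (g : Fˣ) (hg : orderOf g = 2 * m) :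
    ∃ (φ : Multiplicative (ZMod m) →* MulAut (Multiplicative F))
      (ψ : (Multiplicative F) ⋊[φ] (Multiplicative (ZMod m)) →* PSL 2 F),
      Function.Injective φ ∧ Function.Injective ψ := by
  have hg2m : g ^ (2 * m) = 1 := hg ▸ pow_orderOf_eq_one g
  -- the character into the units
  have hχ0 : (zmultiplesHom (Additive Fˣ) (Additive.ofMul (g * g))) (m : ℤ) = 0 := by
    simp only [zmultiplesHom_apply, ← ofMul_zpow]
    rw [zpow_natCast, ← pow_two, ← pow_mul, hg2m]
    rfl
  set χadd : ZMod m →+ Additive Fˣ :=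
    ZMod.lift m ⟨zmultiplesHom (Additive Fˣ) (Additive.ofMul (g * g)), hχ0⟩ with hχadd
  set χ : Multiplicative (ZMod m) →* Fˣ := AddMonoidHom.toMultiplicativeLeft χadd with hχdef
  have hχ : ∀ j : ℤ, χ (Multiplicative.ofAdd ((j : ZMod m))) = g ^ (2 * j) := by
    intro j
    show (χadd ((j : ZMod m))).toMul = _
    rw [hχadd, ZMod.lift_coe]
    show Additive.toMul ((j : ℤ) • Additive.ofMul (g * g)) = _
    rw [← ofMul_zpow, toMul_ofMul, ← pow_two, ← zpow_natCast g 2, ← _root_.zpow_mul]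
    norm_num
  -- units act on Multiplicative F
  set toAut : Fˣ →* MulAut (Multiplicative F) :=
    { toFun := fun c => AddEquiv.toMultiplicative (DistribMulAction.toAddAut Fˣ F c)
      map_one' := by ext x; exact congrArg Multiplicative.ofAdd (one_smul Fˣ x.toAdd)
      map_mul' := fun a b => by ext x; exact congrArg Multiplicative.ofAdd (mul_smul a b x.toAdd) }
    with htoAut
  have htoAut_apply : ∀ (c : Fˣ) (x : Multiplicative F),
      (toAut c) x = Multiplicative.ofAdd ((c : F) * x.toAdd) := fun c x => rfl
  refine ⟨toAut.comp χ, ?_⟩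
  -- the two pieces of ψ
  set f₁ : Multiplicative F →* PSL 2 F :=
    (QuotientGroup.mk' (Subgroup.center _)).comp (unip F) with hf₁def
  have hginv : (g ^ m)⁻¹ = g ^ m := by
    apply inv_eq_of_mul_eq_one_right
    rw [← pow_add, ← two_mul, hg2m]
  have hdc : (diag F g) ^ m ∈ Subgroup.center (Matrix.SpecialLinearGroup (Fin 2) F) := by
    rw [← _root_.map_pow]
    rw [Matrix.SpecialLinearGroup.mem_center_iff]
    refine ⟨((g ^ m : Fˣ) : F), ?_, ?_⟩
    · rw [Fintype.card_fin, ← Units.val_pow_eq_pow_val, ← pow_mul, mul_comm, hg2m, Units.val_one]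
    · ext i j
      rw [diag_coe]
      fin_cases i <;> fin_cases j <;>
        simp [diag, Matrix.scalar_apply, Matrix.diagonal, hginv, ← Units.val_inv_eq_inv_val]
  have hd0 : (zmultiplesHom (Additive (PSL 2 F))
      (Additive.ofMul ((QuotientGroup.mk' (Subgroup.center _)) (diag F g)))) (m : ℤ) = 0 := by
    simp only [zmultiplesHom_apply, ← ofMul_zpow]
    rw [zpow_natCast, ← _root_.map_pow]
    have : ((QuotientGroup.mk' (Subgroup.center _)) ((diag F g) ^ m)) = 1 :=
      (QuotientGroup.eq_one_iff _).mpr hdc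
    rw [this]; rfl
  set dbar : ZMod m →+ Additive (PSL 2 F) := ZMod.lift m ⟨_, hd0⟩ with hdbar
  set f₂ : Multiplicative (ZMod m) →* PSL 2 F := AddMonoidHom.toMultiplicativeLeft dbar with hf₂def
  have hf₂ : ∀ j : ℤ, f₂ (Multiplicative.ofAdd ((j : ZMod m))) =
      (QuotientGroup.mk' (Subgroup.center _)) (diag F (g ^ j)) := by
    intro j
    show (dbar ((j : ZMod m))).toMul = _
    rw [hdbar, ZMod.lift_coe]
    simp only [zmultiplesHom_apply, ← ofMul_zpow]
    rw [← _root_.map_zpow, ← _root_.map_zpow]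
    rfl
  -- compatibility
  have hcomp : ∀ k, f₁.comp ((toAut.comp χ) k).toMonoidHom =
      (MulAut.conj (f₂ k)).toMonoidHom.comp f₁ := by
    intro k
    obtain ⟨j, hj⟩ := ZMod.intCast_surjective (n := m) k.toAdd
    have hk : k = Multiplicative.ofAdd ((j : ZMod m)) := by rw [hj]; exact (ofAdd_toAdd k).symm
    refine MonoidHom.ext fun x => ?_
    simp only [MonoidHom.comp_apply, MulEquiv.coe_toMonoidHom, MulAut.conj_apply, hk]
    rw [MonoidHom.comp_apply, htoAut_apply, hχ j, hf₂ j]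
    have key : (QuotientGroup.mk' (Subgroup.center _)) (unip F (Multiplicative.ofAdd
        (((g ^ j : Fˣ) : F) ^ 2 * x.toAdd))) =
        (QuotientGroup.mk' (Subgroup.center _)) (diag F (g ^ j)) * f₁ x *
          ((QuotientGroup.mk' (Subgroup.center _)) (diag F (g ^ j)))⁻¹ := by
      rw [hf₁def, MonoidHom.comp_apply, ← _root_.map_inv, ← _root_.map_mul, ← _root_.map_mul, ← diag_conj_unip]
    rw [hf₁def, MonoidHom.comp_apply]
    rw [show ((g ^ (2 * j) : Fˣ) : F) = ((g ^ j : Fˣ) : F) ^ 2 by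
      rw [← Units.val_pow_eq_pow_val, ← zpow_natCast (g ^ j), ← _root_.zpow_mul]
      norm_num [mul_comm]]
    exact key
  refine ⟨SemidirectProduct.lift f₁ f₂ hcomp, ?_, ?_⟩
  · -- injectivity of φ
    rw [injective_iff_map_eq_one]
    intro k hk
    obtain ⟨j, hj⟩ := ZMod.intCast_surjective (n := m) k.toAdd
    have hk' : k = Multiplicative.ofAdd ((j : ZMod m)) := by rw [hj]; exact (ofAdd_toAdd k).symm
    have h1 : (toAut.comp χ) k (Multiplicative.ofAdd (1 : F)) = Multiplicative.ofAdd (1 : F) := by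
      rw [hk]; rfl
    rw [MonoidHom.comp_apply, htoAut_apply] at h1
    have h2 : ((χ k : Fˣ) : F) = 1 := by
      have := congrArg Multiplicative.toAdd h1
      simpa using this
    have h3 : χ k = 1 := Units.ext h2
    rw [hk', hχ j] at h3
    have h4 : ((orderOf g : ℤ)) ∣ 2 * j := orderOf_dvd_iff_zpow_eq_one.mpr h3
    rw [hg] at h4
    push_cast at h4
    have h5 : (m : ℤ) ∣ j := by
      rcases h4 with ⟨c, hc⟩
      exact ⟨c, by linarith⟩
    have h6 : ((j : ZMod m)) = 0 := (ZMod.intCast_zmod_eq_zero_iff_dvd j m).mpr h5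
    rw [hk', h6]; rfl
  · -- injectivity of ψ
    rw [injective_iff_map_eq_one]
    rintro ⟨x, k⟩ hz
    obtain ⟨j, hj⟩ := ZMod.intCast_surjective (n := m) k.toAdd
    have hk' : k = Multiplicative.ofAdd ((j : ZMod m)) := by rw [hj]; exact (ofAdd_toAdd k).symm
    have hz' : f₁ x * f₂ k = 1 := hz
    rw [hk', hf₂ j, hf₁def, MonoidHom.comp_apply, ← _root_.map_mul] at hz'
    have hz2 := (QuotientGroup.eq_one_iff _).mp hz'
    rw [Matrix.SpecialLinearGroup.mem_center_iff] at hz2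
    obtain ⟨r, hr2, hrs⟩ := hz2
    have hM : (↑(unip F x * diag F (g ^ j)) : Matrix (Fin 2) (Fin 2) F) =
        !![((g ^ j : Fˣ) : F), x.toAdd * (((g ^ j)⁻¹ : Fˣ) : F); 0,
          (((g ^ j)⁻¹ : Fˣ) : F)] := by
      rw [Matrix.SpecialLinearGroup.coe_mul, unip_coe, diag_coe]
      simp [unip, diag, Matrix.SpecialLinearGroup.coe_mul, Matrix.mul_fin_two]
    rw [hM] at hrs
    have e00 := congr_fun₂ hrs 0 0
    have e01 := congr_fun₂ hrs 0 1
    have e11 := congr_fun₂ hrs 1 1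
    simp [Matrix.scalar_apply, Matrix.diagonal] at e00 e01 e11
    have hne : ((g : F)) ^ j ≠ 0 := zpow_ne_zero _ g.ne_zero
    have hx1 : x = 1 := by
      rcases e01 with h | h
      · exact h
      · exact absurd h hne
    have hsq : ((g : F)) ^ j * ((g : F)) ^ j = 1 := by
      nth_rewrite 2 [e00.symm.trans e11]
      exact mul_inv_cancel₀ hne
    have hgj2 : g ^ (2 * j) = 1 := by
      apply Units.ext
      rw [Units.val_zpow_eq_zpow_val, two_mul, zpow_add₀ g.ne_zero, Units.val_one]
      exact hsq
    have h4 : ((orderOf g : ℤ)) ∣ 2 * j := orderOf_dvd_iff_zpow_eq_one.mpr hgj2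
    rw [hg] at h4
    push_cast at h4
    have h5 : (m : ℤ) ∣ j := by
      rcases h4 with ⟨c, hc⟩
      exact ⟨c, by linarith⟩
    have h6 : ((j : ZMod m)) = 0 := (ZMod.intCast_zmod_eq_zero_iff_dvd j m).mpr h5
    have hk1 : k = 1 := by rw [hk', h6]; rfl
    rw [hx1, hk1]
    rfl

end MetacyclicAux

/-- For an odd prime `p` and `q = p^n`, the group `PSL(2, 𝔽_q)` contains a subgroup which is a
semidirect product `U ⋊ ℤ/((q-1)/2)` with faithful action, where `U` is the additive group of
the field `𝔽_q` (an elementary abelian `p`-group of rank `n`). -/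
theorem psl_two_prime_power_contains_metacyclic (p n : ℕ) [Fact p.Prime] (hp : Odd p)
    (hn : 1 ≤ n) :
    ∃ (φ : Multiplicative (ZMod ((p ^ n - 1) / 2)) →* MulAut (Multiplicative (GaloisField p n)))
      (ψ : (Multiplicative (GaloisField p n)) ⋊[φ]
          (Multiplicative (ZMod ((p ^ n - 1) / 2))) →* PSL 2 (GaloisField p n)),
      Function.Injective φ ∧ Function.Injective ψ := by
  haveI : Fintype (GaloisField p n) := Fintype.ofFinite _
  have hcard : Fintype.card (GaloisField p n) = p ^ n := by
    rw [← Nat.card_eq_fintype_card]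
    exact GaloisField.card p n (by omega)
  obtain ⟨g, hgg⟩ := IsCyclic.exists_generator (α := (GaloisField p n)ˣ)
  have horder : orderOf g = p ^ n - 1 := by
    rw [orderOf_eq_card_of_forall_mem_zpowers hgg, Nat.card_units,
      Nat.card_eq_fintype_card, hcard]
  -- arithmetic
  have hp3 : 3 ≤ p := by
    have := (Fact.out : p.Prime).two_le
    rcases Nat.lt_or_ge p 3 with h | h
    · interval_cases p
      · exact absurd hp (by decide)
    · exact h
  have hq3 : 3 ≤ p ^ n := le_trans hp3 (Nat.le_self_pow (by omega) p)
  have hqodd : Odd (p ^ n) := hp.pow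
  have heven : 2 ∣ p ^ n - 1 := by
    obtain ⟨c, hc⟩ := hqodd
    omega
  have hm2 : 2 * ((p ^ n - 1) / 2) = p ^ n - 1 := Nat.mul_div_cancel' heven
  have hmne : (p ^ n - 1) / 2 ≠ 0 := by omega
  exact MetacyclicAux.aux (GaloisField p n) ((p ^ n - 1) / 2) hmne g (by rw [horder, hm2])
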